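/- arXiv:1603.01900 — 3 statements merged into one kernel-verified Lean document; each statement's English description precedes it below -/
import Mathlib

section
/- Let u < ω and let T₁,…,Tₙ be pairwise disjoint monotone double trees each of order u+1. Then coll(T₁,…,Tₙ) is a monotone double tree of order u. -/
structure PreDF where
  X : Type
  le1 : X → X → Prop
  le2 : X → X → Prop

def IsForest {α : Type} (le : α → α → Prop) : Prop :=
  (∀ a, le a a) ∧ (∀ a b, le a b → le b a → a = b) ∧
  (∀ a b c, le a b → le b c → le a c) ∧
  (∀ a b c, le b a → le c a → le b c ∨ le c b)

def PreDF.IsDoubleForest (P : PreDF) : Prop :=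
  Finite P.X ∧ IsForest P.le1 ∧ IsForest P.le2 ∧
  (∀ a b, P.le2 a b → P.le1 a b) ∧
  (∀ a b c, P.le1 a b → P.le1 b c → P.le2 a c → P.le2 a b)

structure PreMDF where
  X : Type
  le1 : X → X → Prop
  le2 : X → X → Prop
  δ : X → ℕ

def PreMDF.toPreDF (T : PreMDF) : PreDF := ⟨T.X, T.le1, T.le2⟩

/-- A monotone double forest. -/
def PreMDF.IsMDF (T : PreMDF) : Prop :=
  T.toPreDF.IsDoubleForest ∧
  (∀ x y, T.le1 x y → T.δ y ≤ T.δ x) ∧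
  (∀ x y, T.le2 x y → T.δ x = T.δ y)

/-- A monotone double tree: a monotone double forest whose first order has a root. -/
def PreMDF.IsMDT (T : PreMDF) : Prop :=
  T.IsMDF ∧ ∃ r, ∀ y, T.le1 r y

/-- A monotone double tree whose root has label (order) `u`. -/
def PreMDF.IsMDTOfOrder (T : PreMDF) (u : ℕ) : Prop :=
  T.IsMDF ∧ ∃ r, (∀ y, T.le1 r y) ∧ T.δ r = u

/-- A covering of monotone double forests: an injection preserving both orders which
does not decrease labels. -/
def PreMDF.Covering (A B : PreMDF) : Prop :=
  ∃ h : A.X → B.X, Function.Injective h ∧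
    (∀ x y, A.le1 x y → B.le1 (h x) (h y)) ∧
    (∀ x y, A.le2 x y → B.le2 (h x) (h y)) ∧
    (∀ x, A.δ x ≤ B.δ (h x))

/-- `coll(T₁,…,Tₙ)` for trees of order `u+1`: add a fresh root `r` of label `u`,
with `r ≤₁` everything, `r ≤₂ y` iff `y = r` or `y` has label `u+1` in its tree,
and all labels capped at `u`.  (The inputs are replaced by canonically disjoint
copies via a sigma type.) -/
def coll (u : ℕ) (l : List PreMDF) : PreMDF where
  X := Option ((i : Fin l.length) × (l.get i).X)
  le1 := fun x y =>
    match x, y with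
    | none, _ => True
    | some _, none => False
    | some a, some b => ∃ h : b.1 = a.1, (l.get a.1).le1 a.2 (h ▸ b.2)
  le2 := fun x y =>
    match x, y with
    | none, none => True
    | none, some b => (l.get b.1).δ b.2 = u + 1
    | some _, none => False
    | some a, some b => ∃ h : b.1 = a.1, (l.get a.1).le2 a.2 (h ▸ b.2)
  δ := fun x =>
    match x with
    | none => u
    | some a => min ((l.get a.1).δ a.2) u

/-- `exp_u(T₁,…,Tₙ)`: add a fresh root of label `u` below pairwise disjoint copies of
the `Tᵢ`, with no nontrivial `≤₂`-relations from the root and labels unchanged. -/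
def expu (u : ℕ) (l : List PreMDF) : PreMDF where
  X := Option ((i : Fin l.length) × (l.get i).X)
  le1 := fun x y =>
    match x, y with
    | none, _ => True
    | some _, none => False
    | some a, some b => ∃ h : b.1 = a.1, (l.get a.1).le1 a.2 (h ▸ b.2)
  le2 := fun x y =>
    match x, y with
    | none, none => True
    | none, some _ => False
    | some _, none => False
    | some a, some b => ∃ h : b.1 = a.1, (l.get a.1).le2 a.2 (h ▸ b.2)
  δ := fun x =>
    match x with
    | none => u
    | some a => (l.get a.1).δ a.2

/-- The disjoint union `⊕(T₁,…,Tₘ)` of monotone double forests. -/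
def oplus (l : List PreMDF) : PreMDF where
  X := (i : Fin l.length) × (l.get i).X
  le1 := fun a b => ∃ h : b.1 = a.1, (l.get a.1).le1 a.2 (h ▸ b.2)
  le2 := fun a b => ∃ h : b.1 = a.1, (l.get a.1).le2 a.2 (h ▸ b.2)
  δ := fun a => (l.get a.1).δ a.2

/-- `Tˣ`: the substructure of `T` on the upward `≤₁`-cone above `x`. -/
def PreMDF.cone (T : PreMDF) (x : T.X) : PreMDF where
  X := {y : T.X // T.le1 x y}
  le1 := fun a b => T.le1 a.1 b.1
  le2 := fun a b => T.le2 a.1 b.1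
  δ := fun a => T.δ a.1

lemma sigRel {α : Type} {f : α → Type} {R : ∀ i, f i → f i → Prop} {a b : (i : α) × f i}
    (h : ∃ h : b.1 = a.1, R a.1 a.2 (h ▸ b.2)) :
    ∃ (i : α) (x y : f i), a = ⟨i, x⟩ ∧ b = ⟨i, y⟩ ∧ R i x y := by
  obtain ⟨h1, h2⟩ := h
  obtain ⟨i, x⟩ := a
  obtain ⟨j, y⟩ := b
  dsimp at h1 h2
  subst h1
  exact ⟨_, x, y, rfl, rfl, h2⟩

lemma sigRel1 (l : List PreMDF) {a b : (i : Fin l.length) × (l.get i).X}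
    (h : ∃ h : b.1 = a.1, (l.get a.1).le1 a.2 (h ▸ b.2)) :
    ∃ i x y, a = ⟨i, x⟩ ∧ b = ⟨i, y⟩ ∧ (l.get i).le1 x y :=
  sigRel (R := fun i => (l.get i).le1) h

lemma sigRel2 (l : List PreMDF) {a b : (i : Fin l.length) × (l.get i).X}
    (h : ∃ h : b.1 = a.1, (l.get a.1).le2 a.2 (h ▸ b.2)) :
    ∃ i x y, a = ⟨i, x⟩ ∧ b = ⟨i, y⟩ ∧ (l.get i).le2 x y :=
  sigRel (R := fun i => (l.get i).le2) h

lemma sigRel1mk (u : ℕ) (l : List PreMDF) {i : Fin l.length} {x : (l.get i).X}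
    {b : (i : Fin l.length) × (l.get i).X}
    (h : (coll u l).le1 (some ⟨i, x⟩) (some b)) :
    ∃ y, b = ⟨i, y⟩ ∧ (l.get i).le1 x y := by
  obtain ⟨j, x', y, ha, rfl, hr⟩ := sigRel1 l h
  obtain rfl : j = i := (congrArg Sigma.fst ha).symm
  obtain rfl : x' = x := (eq_of_heq (Sigma.mk.inj_iff.1 ha).2).symm
  exact ⟨y, rfl, hr⟩

lemma sigRel2mk (u : ℕ) (l : List PreMDF) {i : Fin l.length} {x : (l.get i).X}
    {b : (i : Fin l.length) × (l.get i).X}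
    (h : (coll u l).le2 (some ⟨i, x⟩) (some b)) :
    ∃ y, b = ⟨i, y⟩ ∧ (l.get i).le2 x y := by
  obtain ⟨j, x', y, ha, rfl, hr⟩ := sigRel2 l h
  obtain rfl : j = i := (congrArg Sigma.fst ha).symm
  obtain rfl : x' = x := (eq_of_heq (Sigma.mk.inj_iff.1 ha).2).symm
  exact ⟨y, rfl, hr⟩

lemma sigRel1mk' (u : ℕ) (l : List PreMDF) {i : Fin l.length} {y : (l.get i).X}
    {c : (i : Fin l.length) × (l.get i).X}
    (h : (coll u l).le1 (some c) (some ⟨i, y⟩)) :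
    ∃ z, c = ⟨i, z⟩ ∧ (l.get i).le1 z y := by
  obtain ⟨j, z, y', rfl, hb, hr⟩ := sigRel1 l h
  obtain rfl : j = i := (congrArg Sigma.fst hb).symm
  obtain rfl : y' = y := (eq_of_heq (Sigma.mk.inj_iff.1 hb).2).symm
  exact ⟨z, rfl, hr⟩

lemma sigRel2mk' (u : ℕ) (l : List PreMDF) {i : Fin l.length} {y : (l.get i).X}
    {c : (i : Fin l.length) × (l.get i).X}
    (h : (coll u l).le2 (some c) (some ⟨i, y⟩)) :
    ∃ z, c = ⟨i, z⟩ ∧ (l.get i).le2 z y := by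
  obtain ⟨j, z, y', rfl, hb, hr⟩ := sigRel2 l h
  obtain rfl : j = i := (congrArg Sigma.fst hb).symm
  obtain rfl : y' = y := (eq_of_heq (Sigma.mk.inj_iff.1 hb).2).symm
  exact ⟨z, rfl, hr⟩

/-- If `T₁,…,Tₙ` are (pairwise disjoint copies of) monotone double trees of order `u+1`,
then `coll(T₁,…,Tₙ)` is a monotone double tree of order `u`. -/
theorem coll_isMDT (u : ℕ) (l : List PreMDF) (h : ∀ T ∈ l, T.IsMDTOfOrder (u + 1)) :
    (coll u l).IsMDTOfOrder u := by
  classical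
  have hT : ∀ i : Fin l.length, (l.get i).IsMDTOfOrder (u + 1) := fun i => h _ (l.get_mem i)
  choose r hr1 hrδ using fun i => (hT i).2
  have hmono : ∀ i x y, (l.get i).le1 x y → (l.get i).δ y ≤ (l.get i).δ x :=
    fun i => (hT i).1.2.1
  have heq2 : ∀ i x y, (l.get i).le2 x y → (l.get i).δ x = (l.get i).δ y :=
    fun i => (hT i).1.2.2
  have hDF : ∀ i, (l.get i).toPreDF.IsDoubleForest := fun i => (hT i).1.1
  have hbound : ∀ i x, (l.get i).δ x ≤ u + 1 := by
    intro i x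
    calc (l.get i).δ x ≤ (l.get i).δ (r i) := hmono i _ _ (hr1 i x)
    _ = u + 1 := hrδ i
  have hdown : ∀ i x y, (l.get i).le1 x y → (l.get i).δ y = u + 1 → (l.get i).δ x = u + 1 := by
    intro i x y hxy hy
    exact le_antisymm (hbound i x) (hy ▸ hmono i x y hxy)
  refine ⟨⟨⟨?_, ?_, ?_, ?_, ?_⟩, ?_, ?_⟩, none, fun y => ?_, rfl⟩
  · -- Finite
    haveI : ∀ i : Fin l.length, Finite ((l.get i).X) := fun i => (hDF i).1
    haveI : Finite ((i : Fin l.length) × (l.get i).X) := inferInstance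
    show Finite (Option ((i : Fin l.length) × (l.get i).X))
    exact Finite.of_equiv (Sum ((i : Fin l.length) × (l.get i).X) (PUnit : Type))
      (Equiv.optionEquivSumPUnit _).symm
  · -- forest le1
    refine ⟨?_, ?_, ?_, ?_⟩
    · rintro (_ | ⟨i, x⟩)
      · trivial
      · exact ⟨rfl, ((hDF i).2.1).1 x⟩
    · rintro (_ | a) (_ | b) hab hba
      · rfl
      · exact False.elim hba
      · exact False.elim hab
      · obtain ⟨i, x, y, rfl, rfl, h1⟩ := sigRel1 l hab
        obtain ⟨h2, h3⟩ := hba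
        have hxy : x = y := ((hDF i).2.1).2.1 x y h1 h3
        rw [hxy]
    · rintro (_ | a) (_ | b) (_ | c) hab hbc
      · trivial
      · trivial
      · exact False.elim hbc
      · trivial
      · exact False.elim hab
      · exact False.elim hab
      · exact False.elim hbc
      · obtain ⟨i, x, y, rfl, rfl, h1⟩ := sigRel1 l hab
        obtain ⟨z, rfl, h2⟩ := sigRel1mk u l hbc
        exact ⟨rfl, ((hDF i).2.1).2.2.1 x y z h1 h2⟩
    · rintro (_ | a) (_ | b) (_ | c) hba hca
      · exact Or.inl trivial
      · exact Or.inl trivial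
      · exact Or.inr trivial
      · exact False.elim hba
      · exact Or.inl trivial
      · exact Or.inl trivial
      · exact Or.inr trivial
      · obtain ⟨i, y, x, rfl, rfl, h1⟩ := sigRel1 l hba
        obtain ⟨z, rfl, h2⟩ := sigRel1mk' u l hca
        rcases ((hDF i).2.1).2.2.2 x y z h1 h2 with hc | hc
        · exact Or.inl ⟨rfl, hc⟩
        · exact Or.inr ⟨rfl, hc⟩
  · -- forest le2
    refine ⟨?_, ?_, ?_, ?_⟩
    · rintro (_ | ⟨i, x⟩)
      · trivial
      · exact ⟨rfl, ((hDF i).2.2.1).1 x⟩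
    · rintro (_ | a) (_ | b) hab hba
      · rfl
      · exact False.elim hba
      · exact False.elim hab
      · obtain ⟨i, x, y, rfl, rfl, h1⟩ := sigRel2 l hab
        obtain ⟨h2, h3⟩ := hba
        have hxy : x = y := ((hDF i).2.2.1).2.1 x y h1 h3
        rw [hxy]
    · rintro (_ | a) (_ | b) (_ | c) hab hbc
      · trivial
      · exact hbc
      · exact False.elim hbc
      · obtain ⟨i, x, y, rfl, rfl, h2⟩ := sigRel2 l hbc
        show (l.get i).δ y = u + 1
        rw [← heq2 i x y h2]
        exact hab
      · exact False.elim hab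
      · exact False.elim hab
      · exact False.elim hbc
      · obtain ⟨i, x, y, rfl, rfl, h1⟩ := sigRel2 l hab
        obtain ⟨z, rfl, h2⟩ := sigRel2mk u l hbc
        exact ⟨rfl, ((hDF i).2.2.1).2.2.1 x y z h1 h2⟩
    · rintro (_ | a) (_ | b) (_ | c) hba hca
      · exact Or.inl trivial
      · exact False.elim hca
      · exact False.elim hba
      · exact False.elim hba
      · exact Or.inl trivial
      · obtain ⟨i, z, x, rfl, rfl, h2⟩ := sigRel2 l hca
        refine Or.inl (show (l.get i).δ z = u + 1 from ?_)
        rw [heq2 i z x h2]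
        exact hba
      · obtain ⟨i, y, x, rfl, rfl, h1⟩ := sigRel2 l hba
        refine Or.inr (show (l.get i).δ y = u + 1 from ?_)
        rw [heq2 i y x h1]
        exact hca
      · obtain ⟨i, y, x, rfl, rfl, h1⟩ := sigRel2 l hba
        obtain ⟨z, rfl, h2⟩ := sigRel2mk' u l hca
        rcases ((hDF i).2.2.1).2.2.2 x y z h1 h2 with hc | hc
        · exact Or.inl ⟨rfl, hc⟩
        · exact Or.inr ⟨rfl, hc⟩
  · -- le2 → le1
    rintro (_ | a) (_ | b) hab
    · trivial
    · trivial
    · exact False.elim hab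
    · obtain ⟨i, x, y, rfl, rfl, h1⟩ := sigRel2 l hab
      exact ⟨rfl, (hDF i).2.2.2.1 x y h1⟩
  · -- mixed condition
    rintro (_ | a) (_ | b) (_ | c) hab hbc hac
    · trivial
    · trivial
    · exact False.elim hbc
    · obtain ⟨i, x, y, rfl, rfl, h2⟩ := sigRel1 l hbc
      exact hdown i x y h2 hac
    · exact False.elim hab
    · exact False.elim hab
    · exact False.elim hbc
    · obtain ⟨i, x, y, rfl, rfl, h1⟩ := sigRel1 l hab
      obtain ⟨z, rfl, h2⟩ := sigRel1mk u l hbc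
      obtain ⟨h3, h4⟩ := hac
      exact ⟨rfl, (hDF i).2.2.2.2 x y z h1 h2 h4⟩
  · -- monotone δ
    rintro (_ | a) (_ | b) hxy
    · exact le_refl u
    · exact min_le_right _ _
    · exact False.elim hxy
    · obtain ⟨i, x, y, rfl, rfl, h1⟩ := sigRel1 l hxy
      exact min_le_min (hmono i x y h1) (le_refl u)
  · -- δ equal along le2
    rintro (_ | a) (_ | b) hxy
    · rfl
    · show u = min ((l.get b.1).δ b.2) u
      have hb : (l.get b.1).δ b.2 = u + 1 := hxy
      rw [hb]
      simp
    · exact False.elim hxy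
    · obtain ⟨i, x, y, rfl, rfl, h1⟩ := sigRel2 l hxy
      show min ((l.get i).δ x) u = min ((l.get i).δ y) u
      rw [heq2 i x y h1]
  · -- root
    cases y <;> trivial
end

section
/- Let u < ω and let T₁,…,Tₘ and S₁,…,Sₙ be monotone double trees of order u+1, each list pairwise disjoint. If there is a covering of coll(T₁,…,Tₘ) into coll(S₁,…,Sₙ), then either there is a covering of ⊕(T₁,…,Tₘ) into ⊕(S₁,…,Sₙ), or there exist j with 1 ≤ j ≤ n and x ∈ |Sⱼ| of order u such that there is a covering of coll(T₁,…,Tₘ) into Sⱼˣ. -/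
lemma delta_le_aux (u : ℕ) (l : List PreMDF) (h : ∀ T ∈ l, T.IsMDTOfOrder (u + 1))
    (i : Fin l.length) (x : (l.get i).X) : (l.get i).δ x ≤ u + 1 := by
  obtain ⟨⟨_, anti, _⟩, r, hr, hδr⟩ := h _ (l.get_mem i)
  calc (l.get i).δ x ≤ (l.get i).δ r := anti r x (hr x)
    _ = u + 1 := hδr

lemma oplus_of_good (u : ℕ) (Ts Ss : List PreMDF)
    (f : (coll u Ts).X → (coll u Ss).X)
    (finj : Function.Injective f)
    (f1 : ∀ x y, (coll u Ts).le1 x y → (coll u Ss).le1 (f x) (f y))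
    (f2 : ∀ x y, (coll u Ts).le2 x y → (coll u Ss).le2 (f x) (f y))
    (fδ : ∀ x, (coll u Ts).δ x ≤ (coll u Ss).δ (f x))
    (hT : ∀ T ∈ Ts, T.IsMDTOfOrder (u + 1))
    (hsome : ∀ a, f (some a) ≠ none)
    (H : ∀ a b, f (some a) = some b → (Ts.get a.1).δ a.2 = u + 1 →
        (Ss.get b.1).δ b.2 = u + 1) :
    (oplus Ts).Covering (oplus Ss) := by
  have hs : ∀ a, ∃ b, f (some a) = some b := by
    intro a
    cases hb : f (some a) with
    | none => exact absurd hb (hsome a)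
    | some b => exact ⟨b, rfl⟩
  choose g hg using hs
  refine ⟨g, ?_, ?_, ?_, ?_⟩
  · intro a a' he
    have : f (some a) = f (some a') := by rw [hg a, hg a', he]
    exact Option.some.inj (finj this)
  · intro a b hab
    have h1 := f1 (some a) (some b) hab
    rw [hg a, hg b] at h1
    exact h1
  · intro a b hab
    have h1 := f2 (some a) (some b) hab
    rw [hg a, hg b] at h1
    exact h1
  · intro a
    show (Ts.get a.1).δ a.2 ≤ (Ss.get (g a).1).δ (g a).2
    have hub := delta_le_aux u Ts hT a.1 a.2
    rcases Nat.lt_or_ge ((Ts.get a.1).δ a.2) (u + 1) with hlt | hge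
    · have hd := fδ (some a)
      rw [hg a] at hd
      have hd' : min ((Ts.get a.1).δ a.2) u ≤ min ((Ss.get (g a).1).δ (g a).2) u := hd
      omega
    · have heq : (Ts.get a.1).δ a.2 = u + 1 := le_antisymm hub hge
      rw [heq, H a (g a) (hg a) heq]

/-- If `T₁,…,Tₘ` and `S₁,…,Sₙ` are monotone double trees of order `u+1` and there is a
covering of `coll(T₁,…,Tₘ)` into `coll(S₁,…,Sₙ)`, then either there is a covering of
`⊕(T₁,…,Tₘ)` into `⊕(S₁,…,Sₙ)`, or there are `j` and `x ∈ |Sⱼ|` of order `u` with a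
covering of `coll(T₁,…,Tₘ)` into `Sⱼˣ`. -/
theorem coll_covering_cases (u : ℕ) (Ts Ss : List PreMDF)
    (hT : ∀ T ∈ Ts, T.IsMDTOfOrder (u + 1)) (hS : ∀ S ∈ Ss, S.IsMDTOfOrder (u + 1))
    (h : (coll u Ts).Covering (coll u Ss)) :
    (oplus Ts).Covering (oplus Ss) ∨
      ∃ (j : Fin Ss.length) (x : (Ss.get j).X),
        (Ss.get j).δ x = u ∧ (coll u Ts).Covering ((Ss.get j).cone x) := by
  obtain ⟨f, finj, f1, f2, fδ⟩ := h
  rcases hfn : f none with _ | x₀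
  · -- f none = none : oplus covering
    left
    refine oplus_of_good u Ts Ss f finj f1 f2 fδ hT ?_ ?_
    · intro a hb
      have := finj (hb.trans hfn.symm)
      exact Option.some_ne_none _ this
    · intro a b hb hδa
      have h2 := f2 none (some a) hδa
      rw [hfn, hb] at h2
      exact h2
  · -- f none = some x₀
    have hsome : ∀ a : (i : Fin Ts.length) × (Ts.get i).X,
        ∃ y : (Ss.get x₀.1).X, f (some a) = some ⟨x₀.1, y⟩ ∧
          (Ss.get x₀.1).le1 x₀.2 y := by
      intro a
      have h1 := f1 none (some a) trivial
      rw [hfn] at h1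
      cases hb : f (some a) with
      | none => rw [hb] at h1; exact h1.elim
      | some b =>
        rw [hb] at h1
        obtain ⟨i, z⟩ := b
        obtain ⟨he, hle⟩ := h1
        have he' : i = x₀.1 := he
        subst he'
        exact ⟨z, rfl, hle⟩
    choose g hg1 hg2 using hsome
    -- u ≤ δ x₀.2
    have hdx := fδ none
    rw [hfn] at hdx
    have hdx' : u ≤ min ((Ss.get x₀.1).δ x₀.2) u := hdx
    have hge : u ≤ (Ss.get x₀.1).δ x₀.2 := by omega
    have hub := delta_le_aux u Ss hS x₀.1 x₀.2
    rcases Nat.lt_or_ge ((Ss.get x₀.1).δ x₀.2) (u + 1) with hlt | hge'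
    · -- δ x₀.2 = u : cone case
      right
      have hδx : (Ss.get x₀.1).δ x₀.2 = u := by omega
      obtain ⟨⟨_, hle1F, hle2F, _⟩, _, hconst⟩ := (hS _ (Ss.get_mem x₀.1)).1
      refine ⟨x₀.1, x₀.2, hδx,
        fun o => o.elim ⟨x₀.2, hle1F.1 x₀.2⟩ (fun a => ⟨g a, hg2 a⟩), ?_, ?_, ?_, ?_⟩
      · intro o o' heq
        cases o with
        | none =>
          cases o' with
          | none => rfl
          | some a =>
            exfalso
            have hv : x₀.2 = g a := congrArg Subtype.val heq
            have : f none = f (some a) := by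
              rw [hfn, hg1 a, ← hv]
            exact Option.some_ne_none _ (finj this).symm
        | some a =>
          cases o' with
          | none =>
            exfalso
            have hv : g a = x₀.2 := congrArg Subtype.val heq
            have : f (some a) = f none := by
              rw [hfn, hg1 a, hv]
            exact Option.some_ne_none _ (finj this)
          | some a' =>
            have hv : g a = g a' := congrArg Subtype.val heq
            have : f (some a) = f (some a') := by rw [hg1 a, hg1 a', hv]
            rw [Option.some.inj (finj this)]
      · intro o o' hle
        cases o with
        | none =>
          cases o' with
          | none => exact hle1F.1 x₀.2
          | some a => exact hg2 a
        | some a =>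
          cases o' with
          | none => exact hle.elim
          | some a' =>
            have h1 := f1 (some a) (some a') hle
            rw [hg1 a, hg1 a'] at h1
            obtain ⟨_, hl⟩ := h1
            exact hl
      · intro o o' hle
        cases o with
        | none =>
          cases o' with
          | none => exact hle2F.1 x₀.2
          | some a =>
            have h2 := f2 none (some a) hle
            rw [hfn, hg1 a] at h2
            obtain ⟨_, hl⟩ := h2
            exact hl
        | some a =>
          cases o' with
          | none => exact hle.elim
          | some a' =>
            have h2 := f2 (some a) (some a') hle
            rw [hg1 a, hg1 a'] at h2
            obtain ⟨_, hl⟩ := h2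
            exact hl
      · intro o
        cases o with
        | none => show u ≤ (Ss.get x₀.1).δ x₀.2; omega
        | some a =>
          have hd := fδ (some a)
          rw [hg1 a] at hd
          have hd' : min ((Ts.get a.1).δ a.2) u ≤ min ((Ss.get x₀.1).δ (g a)) u := hd
          show min ((Ts.get a.1).δ a.2) u ≤ (Ss.get x₀.1).δ (g a)
          omega
    · -- δ x₀.2 = u + 1 : oplus case
      left
      have hconst : ∀ a b, (Ss.get x₀.1).le2 a b → (Ss.get x₀.1).δ a = (Ss.get x₀.1).δ b :=
        ((hS _ (Ss.get_mem x₀.1)).1).2.2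
      refine oplus_of_good u Ts Ss f finj f1 f2 fδ hT ?_ ?_
      · intro a hb
        rw [hg1 a] at hb
        exact Option.some_ne_none _ hb
      · intro a b hb hδa
        have h2 := f2 none (some a) hδa
        rw [hfn, hb] at h2
        obtain ⟨i, z⟩ := b
        obtain ⟨he, hl⟩ := h2
        have he' : i = x₀.1 := he
        subst he'
        have := hconst x₀.2 z hl
        show (Ss.get x₀.1).δ z = u + 1
        omega
end

section
/- Let T₁,…,Tₖ be an order-descending sequence of monotone double trees and u < ω with u < ord(Tₖ). Then the number of nodes of Ψᵤ(T₁,…,Tₖ) equals |T₁| + … + |Tₖ| + (ord(T₁) − u). -/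
/-- A single node of label `u`. -/
def singleNode (u : ℕ) : PreMDF :=
  ⟨PUnit, fun _ _ => True, fun _ _ => True, fun _ => u⟩

/-- The order of the first tree in a list of (tree, order) pairs. -/
def headOrd (l : List (PreMDF × ℕ)) : ℕ :=
  (l.headD (singleNode 0, 0)).2

def Psi (u : ℕ) (l : List (PreMDF × ℕ)) : PreMDF :=
  match l with
  | [] => singleNode u
  | a :: as =>
    if u < ((a :: as).getLast (by simp)).2 then
      if hc : u + 1 < a.2 then
        coll u (Psi (u + 1) ((a :: as).takeWhile (fun p => decide (u + 1 < p.2)))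
          :: ((a :: as).dropWhile (fun p => decide (u + 1 < p.2))).map Prod.fst)
      else coll u ((a :: as).map Prod.fst)
    else
      if he : u < a.2 then
        expu u (Psi u ((a :: as).takeWhile (fun p => decide (u < p.2)))
          :: ((a :: as).dropWhile (fun p => decide (u < p.2))).map Prod.fst)
      else expu u ((a :: as).map Prod.fst)
termination_by l.length + (headOrd l - u)
decreasing_by
  · have htw : (a :: as).takeWhile (fun p => decide (u + 1 < p.2)) =
        a :: as.takeWhile (fun p => decide (u + 1 < p.2)) := by
      simp [List.takeWhile_cons, hc]
    have hlen : (as.takeWhile (fun p => decide (u + 1 < p.2))).length ≤ as.length :=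
      (List.takeWhile_prefix _).length_le
    simp only [htw, headOrd, List.headD, List.length_cons]
    omega
  · rename_i hlast
    have htw : (a :: as).takeWhile (fun p => decide (u < p.2)) =
        a :: as.takeWhile (fun p => decide (u < p.2)) := by
      simp [List.takeWhile_cons, he]
    have hlen : (as.takeWhile (fun p => decide (u < p.2))).length < as.length := by
      rcases eq_or_ne as [] with rfl | hne
      · exfalso; apply hlast; simpa using he
      · have hle : (as.takeWhile (fun p => decide (u < p.2))).length ≤ as.length :=
          (List.takeWhile_prefix _).length_le
        rcases lt_or_eq_of_le hle with h | h
        · exact h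
        · exfalso
          have heq : as.takeWhile (fun p => decide (u < p.2)) = as :=
            (List.takeWhile_prefix _).eq_of_length h
          have hall : ∀ b ∈ as, (fun p : PreMDF × ℕ => decide (u < p.2)) b :=
            List.takeWhile_eq_self_iff.mp heq
          have hmem : as.getLast hne ∈ as := List.getLast_mem hne
          have := hall _ hmem
          apply hlast
          rw [List.getLast_cons hne]
          simpa using this
    simp only [htw, headOrd, List.headD, List.length_cons]
    omega

lemma card_coll (u : ℕ) (l : List PreMDF) (hfin : ∀ T ∈ l, Finite T.X) :
    Nat.card (coll u l).X = 1 + (l.map (fun T => Nat.card T.X)).sum := by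
  haveI : ∀ i : Fin l.length, Finite (l.get i).X :=
    fun i => hfin _ (by simpa using List.getElem_mem i.isLt)
  haveI : ∀ i : Fin l.length, Fintype (l.get i).X := fun i => Fintype.ofFinite _
  have h1 : Nat.card (coll u l).X = Nat.card (Option ((i : Fin l.length) × (l.get i).X)) := rfl
  haveI : Finite ((i : Fin l.length) × (l.get i).X) := inferInstance
  rw [h1, Finite.card_option, Nat.card_eq_fintype_card, Fintype.card_sigma]
  have := Fin.sum_univ_fun_getElem l (fun T => Nat.card T.X)
  simp only [Nat.card_eq_fintype_card] at this
  rw [← this]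
  simp [List.get_eq_getElem]
  omega

lemma getLast_le_head : ∀ (l : List (PreMDF × ℕ)) (hne : l ≠ []),
    l.Chain' (fun p q => q.2 ≤ p.2) → (l.getLast hne).2 ≤ (l.head hne).2
  | [_], _, _ => le_rfl
  | a :: b :: as, _, h => by
    have h1 := (List.isChain_cons_cons.mp h).1
    have h2 := getLast_le_head (b :: as) (by simp) (List.isChain_cons_cons.mp h).2
    rw [List.getLast_cons (by simp : b :: as ≠ [])]
    simp only [List.head_cons] at h2 ⊢
    exact h2.trans h1

lemma finite_of_mdt {p : PreMDF × ℕ} (h : p.1.IsMDTOfOrder p.2) : Finite p.1.X :=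
  h.1.1.1

theorem psi_card_aux : ∀ n u (l : List (PreMDF × ℕ)) (hne : l ≠ []),
    (l.head hne).2 - u ≤ n →
    (∀ p ∈ l, p.1.IsMDTOfOrder p.2) →
    l.Chain' (fun p q => q.2 ≤ p.2) →
    u < (l.getLast hne).2 →
    Nat.card (Psi u l).X =
      (l.map (fun p => Nat.card p.1.X)).sum + ((l.head hne).2 - u) := by
  intro n
  induction n with
  | zero =>
    intro u l hne hn hT hdesc hu
    exact absurd hu (by have := getLast_le_head l hne hdesc; omega)
  | succ n ih =>
    intro u l hne hn hT hdesc hu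
    rcases l with _ | ⟨a, as⟩
    · exact absurd rfl hne
    have hha : (a :: as).head hne = a := rfl
    have ha : u < a.2 := lt_of_lt_of_le hu (by simpa using getLast_le_head _ hne hdesc)
    rw [Psi, if_pos hu]
    by_cases hc : u + 1 < a.2
    · rw [dif_pos hc]
      set p : PreMDF × ℕ → Bool := fun q => decide (u + 1 < q.2) with hp
      set tw := (a :: as).takeWhile p with htwdef
      set dw := (a :: as).dropWhile p with hdwdef
      have htw : tw = a :: as.takeWhile p := by
        simp [htwdef, List.takeWhile_cons, hp, hc]
      have hne_tw : tw ≠ [] := by rw [htw]; simp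
      have hhead_tw : (tw.head hne_tw).2 = a.2 := by
        have : tw.head hne_tw = a := by
          simp only [htw, List.head_cons]
        rw [this]
      simp only [List.head_cons] at hn
      have hIH := ih (u + 1) tw hne_tw (by omega)
        (fun q hq => hT q ((List.takeWhile_sublist _).subset hq))
        (hdesc.prefix (List.takeWhile_prefix _))
        (by have := List.mem_takeWhile_imp (List.getLast_mem hne_tw)
            simpa [hp] using this)
      rw [hhead_tw] at hIH
      haveI : Finite (Psi (u + 1) tw).X := by
        apply Nat.finite_of_card_ne_zero
        rw [hIH]; omega
      rw [card_coll]
      · have hsplit : a :: as = tw ++ dw := (List.takeWhile_append_dropWhile ..).symm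
        have hsum : ((a :: as).map (fun q => Nat.card q.1.X)).sum =
            (tw.map (fun q => Nat.card q.1.X)).sum +
              (dw.map (fun q => Nat.card q.1.X)).sum := by
          conv_lhs => rw [hsplit]
          simp
        rw [hha, hsum]
        simp only [List.map_cons, List.sum_cons, hIH, List.map_map]
        show 1 + ((tw.map fun q => Nat.card q.1.X).sum + (a.2 - (u + 1)) +
            (dw.map ((fun T : PreMDF => Nat.card T.X) ∘ Prod.fst)).sum) = _
        have : (dw.map ((fun T : PreMDF => Nat.card T.X) ∘ Prod.fst)).sum =
            (dw.map (fun q => Nat.card q.1.X)).sum := rfl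
        rw [this]
        omega
      · intro T hTm
        rcases List.mem_cons.mp hTm with rfl | hTm
        · infer_instance
        · obtain ⟨q, hq, rfl⟩ := List.mem_map.mp hTm
          exact finite_of_mdt (hT q ((List.dropWhile_sublist _).subset hq))
    · rw [dif_neg hc]
      rw [card_coll]
      · rw [hha, List.map_map]
        have : ((a :: as).map ((fun T : PreMDF => Nat.card T.X) ∘ Prod.fst)).sum =
            ((a :: as).map (fun q => Nat.card q.1.X)).sum := rfl
        rw [this]
        omega
      · intro T hTm
        obtain ⟨q, hq, rfl⟩ := List.mem_map.mp hTm
        exact finite_of_mdt (hT q hq)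

/-- If `T₁,…,Tₖ` is an order-descending sequence of monotone double trees (with orders
`v₁ ≥ … ≥ vₖ`) and `u < vₖ`, then `Ψ_u(T₁,…,Tₖ)` has exactly
`|T₁| + … + |Tₖ| + (v₁ - u)` nodes. -/
theorem psi_card (u : ℕ) (l : List (PreMDF × ℕ)) (hne : l ≠ [])
    (hT : ∀ p ∈ l, p.1.IsMDTOfOrder p.2)
    (hdesc : l.Chain' (fun p q => q.2 ≤ p.2))
    (hu : u < (l.getLast hne).2) :
    Nat.card (Psi u l).X =
      (l.map (fun p => Nat.card p.1.X)).sum + ((l.head hne).2 - u) :=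
  psi_card_aux ((l.head hne).2 - u) u l hne le_rfl hT hdesc hu
end
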